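/- Let 𝐂 be a full semi-AFL, G a finitely generated group, and H ≤ G a subgroup of finite index. Then, for each • ∈ {∀, ∃}: G is 𝐂^•-flat (as a group) if and only if H is 𝐂^•-flat (as a group). -/

import Mathlib

/-!  Common framework: classes of languages over finite alphabets, `C^∀`- and
`C^∃`-subsets of finitely generated monoids and groups, closure properties
(cone, full semi-AFL), and `C^•`-flatness.  -/

/-- A class of languages: for each finite alphabet `Fin n`, a collection of languages over it. -/
abbrev LangClass : Type := ∀ n : ℕ, Set (Set (List (Fin n)))

/-- `π` is a surjective monoid homomorphism from the free monoid on `Fin n`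
(words, under concatenation) onto `M`; i.e. it presents `M` as a monoid generated
by the finite set `Fin n`. -/
structure FreeHomOnto {n : ℕ} (M : Type) [Monoid M] (π : List (Fin n) → M) : Prop where
  map_nil : π [] = 1
  map_append : ∀ u v : List (Fin n), π (u ++ v) = π u * π v
  surjective : Function.Surjective π

/-- `X ⊆ M` is a `C^∀`-subset of `M` w.r.t. the generating map `π`:
the full preimage `π⁻¹(X)` is a language of the class `C`. -/
def CForall (C : LangClass) {n : ℕ} {M : Type} [Monoid M]
    (π : List (Fin n) → M) (X : Set M) : Prop :=
  {w : List (Fin n) | π w ∈ X} ∈ C n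

/-- `X ⊆ M` is a `C^∃`-subset of `M` w.r.t. the generating map `π`:
some language of the class `C` is mapped onto `X` by `π`. -/
def CExists (C : LangClass) {n : ℕ} {M : Type} [Monoid M]
    (π : List (Fin n) → M) (X : Set M) : Prop :=
  ∃ L ∈ C n, π '' L = X

/-- Closure under inverse images of homomorphisms of free monoids on finite alphabets.
Such a homomorphism is determined by its values `f i` on letters, sending `w` to `w.flatMap f`. -/
def ClosedUnderInvHom (C : LangClass) : Prop :=
  ∀ (m n : ℕ) (f : Fin m → List (Fin n)), ∀ L ∈ C n,
    {w : List (Fin m) | w.flatMap f ∈ L} ∈ C m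

/-- Closure under images of homomorphisms of free monoids on finite alphabets. -/
def ClosedUnderHom (C : LangClass) : Prop :=
  ∀ (m n : ℕ) (f : Fin m → List (Fin n)), ∀ L ∈ C m,
    (fun w : List (Fin m) => w.flatMap f) '' L ∈ C n

/-- A language over `Fin n` is regular if it is accepted by a DFA with finitely many states. -/
def IsRegularLang {n : ℕ} (L : Set (List (Fin n))) : Prop :=
  ∃ (σ : Type) (_ : Fintype σ) (A : DFA (Fin n) σ), ∀ w : List (Fin n), w ∈ A.accepts ↔ w ∈ L

/-- Closure under intersection with regular languages. -/
def ClosedUnderInterReg (C : LangClass) : Prop :=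
  ∀ (n : ℕ), ∀ L ∈ C n, ∀ R : Set (List (Fin n)), IsRegularLang R → L ∩ R ∈ C n

/-- Closure under (binary) union. -/
def ClosedUnderUnion (C : LangClass) : Prop :=
  ∀ (n : ℕ), ∀ L₁ ∈ C n, ∀ L₂ ∈ C n, L₁ ∪ L₂ ∈ C n

/-- A cone: a class of languages closed under homomorphisms, inverse homomorphisms,
and intersection with regular languages. -/
def IsCone (C : LangClass) : Prop :=
  ClosedUnderHom C ∧ ClosedUnderInvHom C ∧ ClosedUnderInterReg C

/-- A full semi-AFL: a cone closed under union. -/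
def IsFullSemiAFL (C : LangClass) : Prop :=
  IsCone C ∧ ClosedUnderUnion C

/-- `G` is `C^∀`-flat as a group: for every finitely generated subgroup `H ≤ G`
(presented by a finite monoid generating map `ρ`), a subset of `H` is a `C^∀`-subset
of `G` iff it is a `C^∀`-subset of `H`; i.e. `C^∀(G | H) = C^∀(H)`. -/
def GroupCForallFlat (C : LangClass) (G : Type) [Group G] : Prop :=
  ∀ (H : Subgroup G) (n k : ℕ) (π : List (Fin n) → G) (ρ : List (Fin k) → ↥H),
    FreeHomOnto G π → FreeHomOnto (↥H) ρ →
      ∀ X : Set G, X ⊆ (H : Set G) →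
        (CForall C π X ↔ CForall C ρ (Subtype.val ⁻¹' X))

/-- `G` is `C^∃`-flat as a group: for every finitely generated subgroup `H ≤ G`,
a subset of `H` is a `C^∃`-subset of `G` iff it is a `C^∃`-subset of `H`;
i.e. `C^∃(G | H) = C^∃(H)`. -/
def GroupCExistsFlat (C : LangClass) (G : Type) [Group G] : Prop :=
  ∀ (H : Subgroup G) (n k : ℕ) (π : List (Fin n) → G) (ρ : List (Fin k) → ↥H),
    FreeHomOnto G π → FreeHomOnto (↥H) ρ →
      ∀ X : Set G, X ⊆ (H : Set G) →
        (CExists C π X ↔ CExists C ρ (Subtype.val ⁻¹' X))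

/-- `M` is `C^∀`-flat as a monoid: for every finitely generated submonoid `N ≤ M`,
a subset of `N` is a `C^∀`-subset of `M` iff it is a `C^∀`-subset of `N`;
i.e. `C^∀(M | N) = C^∀(N)`. -/
def MonoidCForallFlat (C : LangClass) (M : Type) [Monoid M] : Prop :=
  ∀ (N : Submonoid M) (n k : ℕ) (π : List (Fin n) → M) (ρ : List (Fin k) → ↥N),
    FreeHomOnto M π → FreeHomOnto (↥N) ρ →
      ∀ X : Set M, X ⊆ (N : Set M) →
        (CForall C π X ↔ CForall C ρ (Subtype.val ⁻¹' X))

/-- `M` is `C^∃`-flat as a monoid: for every finitely generated submonoid `N ≤ M`,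
a subset of `N` is a `C^∃`-subset of `M` iff it is a `C^∃`-subset of `N`;
i.e. `C^∃(M | N) = C^∃(N)`. -/
def MonoidCExistsFlat (C : LangClass) (M : Type) [Monoid M] : Prop :=
  ∀ (N : Submonoid M) (n k : ℕ) (π : List (Fin n) → M) (ρ : List (Fin k) → ↥N),
    FreeHomOnto M π → FreeHomOnto (↥N) ρ →
      ∀ X : Set M, X ⊆ (N : Set M) →
        (CExists C π X ↔ CExists C ρ (Subtype.val ⁻¹' X))
namespace S15A

variable {C : LangClass}

lemma FH_cons {n : ℕ} {M : Type} [Monoid M] {π : List (Fin n) → M} (h : FreeHomOnto M π)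
    (a : Fin n) (w : List (Fin n)) : π (a :: w) = π [a] * π w := by
  simpa using h.map_append [a] w

lemma flatMap_eq {n m : ℕ} {M : Type} [Monoid M] {π : List (Fin n) → M}
    (hnil : π [] = 1) (happ : ∀ u v, π (u ++ v) = π u * π v)
    {τ : List (Fin m) → M} (tnil : τ [] = 1) (tapp : ∀ u v, τ (u ++ v) = τ u * τ v)
    (f : Fin m → List (Fin n)) (hf : ∀ a, π (f a) = τ [a]) :
    ∀ w : List (Fin m), π (w.flatMap f) = τ w
  | [] => by simpa using hnil.trans tnil.symm
  | a :: w => by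
    have h1 : (a::w).flatMap f = f a ++ w.flatMap f := by simp
    have h2 : ([a] ++ w : List (Fin m)) = a :: w := rfl
    rw [h1, happ, hf, flatMap_eq hnil happ tnil tapp f hf w, ← tapp, h2]

/-! ### Coset DFA -/

def cosetDFA {n : ℕ} {M : Type} [Group M] (π : List (Fin n) → M) (H' : Subgroup M)
    (acc : Set (M ⧸ H')) : DFA (Fin n) (M ⧸ H') :=
  ⟨fun q a => (π [a])⁻¹ • q, QuotientGroup.mk 1, acc⟩

lemma cosetDFA_eval {n : ℕ} {M : Type} [Group M] {π : List (Fin n) → M}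
    (hπ : FreeHomOnto M π) (H' : Subgroup M) (acc : Set (M ⧸ H')) :
    ∀ (w : List (Fin n)) (q : M ⧸ H'), (cosetDFA π H' acc).evalFrom q w = (π w)⁻¹ • q
  | [], q => by simp [DFA.evalFrom_nil, hπ.map_nil]
  | a :: w, q => by
    have h1 : (cosetDFA π H' acc).evalFrom q (a::w)
        = (cosetDFA π H' acc).evalFrom ((π [a])⁻¹ • q) w := rfl
    rw [h1, cosetDFA_eval hπ H' acc w, smul_smul, ← mul_inv_rev, ← FH_cons hπ]

lemma coset_lang_regular {n : ℕ} {M : Type} [Group M] {π : List (Fin n) → M}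
    (hπ : FreeHomOnto M π) (H' : Subgroup M) [Finite (M ⧸ H')] (r : M) :
    IsRegularLang {w : List (Fin n) | π w * r⁻¹ ∈ H'} := by
  refine ⟨M ⧸ H', Fintype.ofFinite _, cosetDFA π H' {q | q = QuotientGroup.mk r⁻¹}, fun w => ?_⟩
  rw [DFA.mem_accepts]
  show (cosetDFA π H' _).evalFrom (QuotientGroup.mk 1) w ∈ _ ↔ _
  rw [cosetDFA_eval hπ]
  show (π w)⁻¹ • (QuotientGroup.mk 1 : M ⧸ H') = QuotientGroup.mk r⁻¹ ↔ _
  have h1 : (π w)⁻¹ • (QuotientGroup.mk 1 : M ⧸ H') = QuotientGroup.mk ((π w)⁻¹) := by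
    show QuotientGroup.mk ((π w)⁻¹ * 1) = _
    rw [mul_one]
  rw [h1, QuotientGroup.eq]
  simp


/-! ### Marker language -/

def markerSet (n : ℕ) : Set (List (Fin (n+1))) :=
  {v | ∃ w : List (Fin n), v = w.map Fin.castSucc ++ [Fin.last n]}

def markerDFA (n : ℕ) : DFA (Fin (n+1)) (Fin 3) :=
  ⟨fun s a => if s = 0 then (if a = Fin.last n then 1 else 0) else 2, 0, {1}⟩

lemma markerDFA_eval_two (n : ℕ) : ∀ v : List (Fin (n+1)), (markerDFA n).evalFrom 2 v = 2
  | [] => rfl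
  | a :: v => by
    have : (markerDFA n).evalFrom 2 (a :: v) = (markerDFA n).evalFrom 2 v := rfl
    rw [this, markerDFA_eval_two n v]

lemma markerDFA_eval_one (n : ℕ) : ∀ v : List (Fin (n+1)), v ≠ [] →
      (markerDFA n).evalFrom 1 v = 2
  | [], h => absurd rfl h
  | a :: v, _ => by
    have : (markerDFA n).evalFrom 1 (a :: v) = (markerDFA n).evalFrom 2 v := rfl
    rw [this, markerDFA_eval_two n v]

lemma markerDFA_eval_castSucc (n : ℕ) :
    ∀ w : List (Fin n), (markerDFA n).evalFrom 0 (w.map Fin.castSucc) = 0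
  | [] => rfl
  | a :: w => by
    have h1 : (markerDFA n).evalFrom 0 ((a :: w).map Fin.castSucc)
        = (markerDFA n).evalFrom ((markerDFA n).step 0 a.castSucc) (w.map Fin.castSucc) := rfl
    have h2 : (markerDFA n).step 0 a.castSucc = 0 := by
      show (if (0 : Fin 3) = 0 then (if a.castSucc = Fin.last n then 1 else 0) else 2) = 0
      rw [if_pos rfl, if_neg (Fin.castSucc_lt_last a).ne]
    rw [h1, h2, markerDFA_eval_castSucc n w]

lemma markerDFA_correct (n : ℕ) :
    ∀ v : List (Fin (n+1)), v ∈ (markerDFA n).accepts ↔ v ∈ markerSet n := by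
  have fwd : ∀ v : List (Fin (n+1)), (markerDFA n).evalFrom 0 v = 1 → v ∈ markerSet n := by
    intro v
    induction v with
    | nil => intro h; exact absurd (show (0:Fin 3) = 1 from h) (by decide)
    | cons a v ih =>
      intro h
      by_cases ha : a = Fin.last n
      · have h1 : (markerDFA n).evalFrom 0 (a :: v) = (markerDFA n).evalFrom 1 v := by
          show (markerDFA n).evalFrom ((markerDFA n).step 0 a) v = _
          have : (markerDFA n).step 0 a = 1 := by
            show (if (0:Fin 3) = 0 then (if a = Fin.last n then 1 else 0) else 2) = 1
            rw [if_pos rfl, if_pos ha]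
          rw [this]
        rw [h1] at h
        have hv : v = [] := by
          by_contra hne
          rw [markerDFA_eval_one n v hne] at h
          exact absurd h (by decide)
        exact ⟨[], by simp [hv, ha]⟩
      · have h1 : (markerDFA n).evalFrom 0 (a :: v) = (markerDFA n).evalFrom 0 v := by
          show (markerDFA n).evalFrom ((markerDFA n).step 0 a) v = _
          have : (markerDFA n).step 0 a = 0 := by
            show (if (0:Fin 3) = 0 then (if a = Fin.last n then 1 else 0) else 2) = 0
            rw [if_pos rfl, if_neg ha]
          rw [this]
        rw [h1] at h
        obtain ⟨w, hw⟩ := ih h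
        obtain ⟨i, hi⟩ := Fin.exists_castSucc_eq.mpr ha
        exact ⟨i :: w, by simp [hw, ← hi]⟩
  intro v
  rw [DFA.mem_accepts]
  constructor
  · exact fun h => fwd v h
  · rintro ⟨w, rfl⟩
    show (markerDFA n).evalFrom 0 (List.map Fin.castSucc w ++ [Fin.last n]) ∈ ({1} : Set (Fin 3))
    rw [DFA.evalFrom_append_singleton, markerDFA_eval_castSucc n w]
    show (if (0:Fin 3) = 0 then (if Fin.last n = Fin.last n then 1 else 0) else 2) ∈ ({1} : Set (Fin 3))
    rw [if_pos rfl, if_pos rfl]; rfl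

lemma markerSet_regular (n : ℕ) : IsRegularLang (markerSet n) :=
  ⟨Fin 3, inferInstance, markerDFA n, markerDFA_correct n⟩

/-! ### word quotient and word append -/

def embHomU (n : ℕ) (u : List (Fin n)) : Fin (n+1) → List (Fin n) :=
  Fin.lastCases u (fun i => [i])

lemma flatMap_embHomU (n : ℕ) (u : List (Fin n)) (w : List (Fin n)) :
    (w.map Fin.castSucc ++ [Fin.last n]).flatMap (embHomU n u) = w ++ u := by
  induction w with
  | nil => simp [embHomU]
  | cons a w ih =>
    simp only [List.map_cons, List.cons_append, List.flatMap_cons] at *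
    rw [ih]
    have : embHomU n u a.castSucc = [a] := by
      simp [embHomU]
    rw [this]; rfl

lemma quot_mem (hC : IsCone C) {n : ℕ} {L : Set (List (Fin n))} (hL : L ∈ C n)
    (u : List (Fin n)) : {w | w ++ u ∈ L} ∈ C n := by
  obtain ⟨hHom, hInv, hReg⟩ := hC
  have h1 : {v : List (Fin (n+1)) | v.flatMap (embHomU n u) ∈ L} ∈ C (n+1) :=
    hInv _ _ _ L hL
  have h2 := hReg _ _ h1 (markerSet n) (markerSet_regular n)
  have h3 := hHom _ _ (embHomU n []) _ h2
  have h4 : (fun v : List (Fin (n+1)) => v.flatMap (embHomU n []))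
      '' ({v | v.flatMap (embHomU n u) ∈ L} ∩ markerSet n) = {w | w ++ u ∈ L} := by
    ext x
    simp only [Set.mem_image, Set.mem_inter_iff, Set.mem_setOf_eq, markerSet]
    constructor
    · rintro ⟨v, ⟨hv1, w, rfl⟩, rfl⟩
      rw [flatMap_embHomU] at hv1
      rw [flatMap_embHomU]
      simpa using hv1
    · intro hx
      exact ⟨x.map Fin.castSucc ++ [Fin.last n],
        ⟨by rw [flatMap_embHomU]; exact hx, x, rfl⟩, by rw [flatMap_embHomU]; simp⟩
  rwa [h4] at h3

lemma append_mem (hC : IsCone C) {n : ℕ} {L : Set (List (Fin n))} (hL : L ∈ C n)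
    (u : List (Fin n)) : {v | ∃ w ∈ L, v = w ++ u} ∈ C n := by
  obtain ⟨hHom, hInv, hReg⟩ := hC
  have h1 : {v : List (Fin (n+1)) | v.flatMap (embHomU n []) ∈ L} ∈ C (n+1) :=
    hInv _ _ _ L hL
  have h2 := hReg _ _ h1 (markerSet n) (markerSet_regular n)
  have h3 := hHom _ _ (embHomU n u) _ h2
  have h4 : (fun v : List (Fin (n+1)) => v.flatMap (embHomU n u))
      '' ({v | v.flatMap (embHomU n []) ∈ L} ∩ markerSet n) = {v | ∃ w ∈ L, v = w ++ u} := by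
    ext x
    simp only [Set.mem_image, Set.mem_inter_iff, Set.mem_setOf_eq, markerSet]
    constructor
    · rintro ⟨v, ⟨hv1, w, rfl⟩, rfl⟩
      rw [flatMap_embHomU] at hv1
      rw [flatMap_embHomU]
      exact ⟨w, by simpa using hv1, rfl⟩
    · rintro ⟨w, hw, rfl⟩
      exact ⟨w.map Fin.castSucc ++ [Fin.last n],
        ⟨by rw [flatMap_embHomU]; simpa using hw, w, rfl⟩, by rw [flatMap_embHomU]⟩
  rwa [h4] at h3

/-! ### finite unions -/

lemma biUnion_mem (hU : ClosedUnderUnion C) {n : ℕ} {ι : Type} [Finite ι] [Nonempty ι]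
    (P : ι → Set (List (Fin n))) (h : ∀ i, P i ∈ C n) : (⋃ i, P i) ∈ C n := by
  haveI := Fintype.ofFinite ι
  haveI := Classical.decEq ι
  have key : ∀ s : Finset ι, s.Nonempty → (⋃ i ∈ s, P i) ∈ C n := by
    intro s hs
    induction s using Finset.induction_on with
    | empty => exact absurd hs (by simp)
    | @insert a s ha ih =>
      rcases s.eq_empty_or_nonempty with rfl | hs'
      · simpa using h a
      · have : (⋃ i ∈ insert a s, P i) = P a ∪ ⋃ i ∈ s, P i := by
          simp [Set.biUnion_insert]
        rw [this]
        exact hU n _ (h a) _ (ih hs')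
  have := key Finset.univ Finset.univ_nonempty
  simpa using this


/-! ### Right translation -/

lemma translate_forall (hC : IsCone C) {n : ℕ} {M : Type} [Group M] {π : List (Fin n) → M}
    (hπ : FreeHomOnto M π) (g : M) (X : Set M) (h : CForall C π X) :
    CForall C π {x | x * g ∈ X} := by
  obtain ⟨u, hu⟩ := hπ.surjective g
  have hset : {w : List (Fin n) | π w ∈ {x | x * g ∈ X}}
      = {w | w ++ u ∈ {w' : List (Fin n) | π w' ∈ X}} := by
    ext w
    simp [Set.mem_setOf_eq, hπ.map_append, hu]
  show _ ∈ C n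
  rw [hset]
  exact quot_mem hC h u

lemma translate_exists (hC : IsCone C) {n : ℕ} {M : Type} [Group M] {π : List (Fin n) → M}
    (hπ : FreeHomOnto M π) (g : M) (X : Set M) (h : CExists C π X) :
    CExists C π {x | x * g ∈ X} := by
  obtain ⟨u, hu⟩ := hπ.surjective g⁻¹
  obtain ⟨L, hL, hLX⟩ := h
  refine ⟨{v | ∃ w ∈ L, v = w ++ u}, append_mem hC hL u, ?_⟩
  ext x
  constructor
  · rintro ⟨v, ⟨w, hw, rfl⟩, rfl⟩
    show π (w ++ u) * g ∈ X
    rw [hπ.map_append, hu, mul_assoc, inv_mul_cancel, mul_one]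
    rw [← hLX]
    exact ⟨w, hw, rfl⟩
  · intro hx
    have : x * g ∈ π '' L := by rw [hLX]; exact hx
    obtain ⟨w, hw, hwx⟩ := this
    refine ⟨w ++ u, ⟨w, hw, rfl⟩, ?_⟩
    rw [hπ.map_append, hu, hwx, mul_assoc, mul_inv_cancel, mul_one]

lemma translate_iff_forall (hC : IsCone C) {n : ℕ} {M : Type} [Group M] {π : List (Fin n) → M}
    (hπ : FreeHomOnto M π) (g : M) (X : Set M) :
    CForall C π X ↔ CForall C π {x | x * g ∈ X} := by
  refine ⟨translate_forall hC hπ g X, fun h => ?_⟩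
  have h2 := translate_forall hC hπ g⁻¹ _ h
  have : {x : M | x * g⁻¹ ∈ {x | x * g ∈ X}} = X := by
    ext x; simp
  rwa [this] at h2

lemma translate_iff_exists (hC : IsCone C) {n : ℕ} {M : Type} [Group M] {π : List (Fin n) → M}
    (hπ : FreeHomOnto M π) (g : M) (X : Set M) :
    CExists C π X ↔ CExists C π {x | x * g ∈ X} := by
  refine ⟨translate_exists hC hπ g X, fun h => ?_⟩
  have h2 := translate_exists hC hπ g⁻¹ _ h
  have : {x : M | x * g⁻¹ ∈ {x | x * g ∈ X}} = X := by
    ext x; simp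
  rwa [this] at h2

/-! ### Presentation independence -/

lemma indep_forall_mp (hC : IsCone C) {M : Type} [Monoid M] {n m : ℕ}
    {π : List (Fin n) → M} {π' : List (Fin m) → M}
    (hπ : FreeHomOnto M π) (hπ' : FreeHomOnto M π') (X : Set M)
    (h : CForall C π X) : CForall C π' X := by
  choose f hf using fun a : Fin m => hπ.surjective (π' [a])
  have key := flatMap_eq hπ.map_nil hπ.map_append hπ'.map_nil hπ'.map_append f hf
  have hset : {w : List (Fin m) | π' w ∈ X}
      = {w : List (Fin m) | w.flatMap f ∈ {w' : List (Fin n) | π w' ∈ X}} := by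
    ext w; simp [Set.mem_setOf_eq, key w]
  show _ ∈ C m
  rw [hset]
  exact hC.2.1 m n f _ h

lemma indep_exists_mp (hC : IsCone C) {M : Type} [Monoid M] {n m : ℕ}
    {π : List (Fin n) → M} {π' : List (Fin m) → M}
    (hπ : FreeHomOnto M π) (hπ' : FreeHomOnto M π') (X : Set M)
    (h : CExists C π X) : CExists C π' X := by
  choose f hf using fun a : Fin n => hπ'.surjective (π [a])
  have key := flatMap_eq hπ'.map_nil hπ'.map_append hπ.map_nil hπ.map_append f hf
  obtain ⟨L, hL, hLX⟩ := h
  refine ⟨(fun w : List (Fin n) => w.flatMap f) '' L, hC.1 n m f L hL, ?_⟩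
  rw [← Set.image_comp, ← hLX]
  exact Set.image_congr' key

lemma indep_forall (hC : IsCone C) {M : Type} [Monoid M] {n m : ℕ}
    {π : List (Fin n) → M} {π' : List (Fin m) → M}
    (hπ : FreeHomOnto M π) (hπ' : FreeHomOnto M π') (X : Set M) :
    CForall C π X ↔ CForall C π' X :=
  ⟨indep_forall_mp hC hπ hπ' X, indep_forall_mp hC hπ' hπ X⟩

lemma indep_exists (hC : IsCone C) {M : Type} [Monoid M] {n m : ℕ}
    {π : List (Fin n) → M} {π' : List (Fin m) → M}
    (hπ : FreeHomOnto M π) (hπ' : FreeHomOnto M π') (X : Set M) :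
    CExists C π X ↔ CExists C π' X :=
  ⟨indep_exists_mp hC hπ hπ' X, indep_exists_mp hC hπ' hπ X⟩

/-! ### Transfer along isomorphisms -/

lemma iso_fho {M M' : Type} [Monoid M] [Monoid M'] {k : ℕ} {ρ : List (Fin k) → M}
    (h : FreeHomOnto M ρ) (φ : M ≃* M') : FreeHomOnto M' (fun w => φ (ρ w)) where
  map_nil := by rw [h.map_nil, map_one]
  map_append := fun u v => by rw [h.map_append, map_mul]
  surjective := φ.surjective.comp h.surjective

lemma iso_forall {M M' : Type} [Monoid M] [Monoid M'] {k : ℕ} {ρ : List (Fin k) → M}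
    (φ : M ≃* M') {S : Set M} {S' : Set M'} (hS : ∀ x, x ∈ S ↔ φ x ∈ S') :
    CForall C ρ S ↔ CForall C (fun w => φ (ρ w)) S' := by
  show _ ∈ C k ↔ _ ∈ C k
  have : {w : List (Fin k) | ρ w ∈ S} = {w | φ (ρ w) ∈ S'} := by
    ext w; exact hS (ρ w)
  rw [this]

lemma iso_exists {M M' : Type} [Monoid M] [Monoid M'] {k : ℕ} {ρ : List (Fin k) → M}
    (φ : M ≃* M') {S : Set M} {S' : Set M'} (hS : ∀ x, x ∈ S ↔ φ x ∈ S') :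
    CExists C ρ S ↔ CExists C (fun w => φ (ρ w)) S' := by
  have himg : φ '' S = S' := by
    ext y
    constructor
    · rintro ⟨x, hx, rfl⟩; exact (hS x).mp hx
    · intro hy
      exact ⟨φ.symm y, (hS _).mpr (by simpa using hy), by simp⟩
  have hcomp : ∀ L : Set (List (Fin k)), (fun w => φ (ρ w)) '' L = φ '' (ρ '' L) := by
    intro L
    rw [Set.image_image]
  constructor
  · rintro ⟨L, hL, hLS⟩
    refine ⟨L, hL, ?_⟩
    rw [hcomp, hLS, himg]
  · rintro ⟨L, hL, hLS⟩
    refine ⟨L, hL, ?_⟩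
    have h2 : φ '' (ρ '' L) = φ '' S := by
      rw [himg, ← hLS, hcomp]
    exact (Set.image_injective.mpr φ.injective) h2


/-! ### Runs of the coset automaton and the Schreier presentation -/

def runW {n : ℕ} {Q : Type} (δ : Q → Fin n → Q) : Q → List (Fin n) → List (Q × Fin n)
  | _, [] => []
  | q, a :: w => (q, a) :: runW δ (δ q a) w

def transW {n : ℕ} {Q : Type} (δ : Q → Fin n → Q) : Q → List (Fin n) → Q
  | q, [] => q
  | q, a :: w => transW δ (δ q a) w

@[simp] lemma runW_nil {n : ℕ} {Q : Type} (δ : Q → Fin n → Q) (q : Q) : runW δ q [] = [] := rfl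
@[simp] lemma runW_cons {n : ℕ} {Q : Type} (δ : Q → Fin n → Q) (q : Q) (a : Fin n)
    (w : List (Fin n)) : runW δ q (a :: w) = (q, a) :: runW δ (δ q a) w := rfl
@[simp] lemma transW_nil {n : ℕ} {Q : Type} (δ : Q → Fin n → Q) (q : Q) : transW δ q [] = q := rfl
@[simp] lemma transW_cons {n : ℕ} {Q : Type} (δ : Q → Fin n → Q) (q : Q) (a : Fin n)
    (w : List (Fin n)) : transW δ q (a :: w) = transW δ (δ q a) w := rfl

lemma runW_snd {n : ℕ} {Q : Type} (δ : Q → Fin n → Q) :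
    ∀ (w : List (Fin n)) (q : Q), (runW δ q w).map Prod.snd = w
  | [], _ => rfl
  | a :: w, q => by rw [runW_cons, List.map_cons, runW_snd δ w (δ q a)]

lemma transW_smul {n : ℕ} {M : Type} [Group M] {π : List (Fin n) → M}
    (hπ : FreeHomOnto M π) {Q : Type} [MulAction M Q] (δ : Q → Fin n → Q)
    (hδ : ∀ q a, δ q a = (π [a])⁻¹ • q) :
    ∀ (w : List (Fin n)) (q : Q), transW δ q w = (π w)⁻¹ • q
  | [], q => by rw [transW_nil, hπ.map_nil, inv_one, one_smul]
  | a :: w, q => by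
    rw [transW_cons, transW_smul hπ δ hδ w, hδ, smul_smul, ← mul_inv_rev, ← FH_cons hπ]

lemma runW_prod {n : ℕ} {M : Type} [Group M] {π : List (Fin n) → M}
    (hπ : FreeHomOnto M π) {Q : Type} [MulAction M Q] (δ : Q → Fin n → Q)
    (hδ : ∀ q a, δ q a = (π [a])⁻¹ • q) (s : Q → M) :
    ∀ (w : List (Fin n)) (q : Q),
      ((runW δ q w).map (fun b => (s b.1)⁻¹ * π [b.2] * s (δ b.1 b.2))).prod
        = (s q)⁻¹ * π w * s ((π w)⁻¹ • q)
  | [], q => by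
    rw [runW_nil, List.map_nil, List.prod_nil, hπ.map_nil, inv_one, one_smul, mul_one]
    rw [inv_mul_cancel]
  | a :: w, q => by
    rw [runW_cons, List.map_cons, List.prod_cons, runW_prod hπ δ hδ s w (δ q a)]
    have h1 : (π (a :: w))⁻¹ • q = (π w)⁻¹ • ((π [a])⁻¹ • q) := by
      rw [FH_cons hπ, mul_inv_rev, mul_smul]
    have h2 : π (a :: w) = π [a] * π w := FH_cons hπ a w
    rw [h1, h2, ← hδ q a]
    show (s q)⁻¹ * π [a] * s (δ q a) * ((s (δ q a))⁻¹ * π w * s ((π w)⁻¹ • δ q a))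
        = (s q)⁻¹ * (π [a] * π w) * s ((π w)⁻¹ • δ q a)
    group

def runDFA {n k : ℕ} {Q : Type} [DecidableEq Q] (e : Fin k ≃ Q × Fin n)
    (δ : Q → Fin n → Q) (q₀ : Q) : DFA (Fin k) (Option Q) :=
  ⟨fun st b => st.bind (fun q => if (e b).1 = q then some (δ q (e b).2) else none),
    some q₀, {some q₀}⟩

lemma runDFA_none {n k : ℕ} {Q : Type} [DecidableEq Q] (e : Fin k ≃ Q × Fin n)
    (δ : Q → Fin n → Q) (q₀ : Q) :
    ∀ v : List (Fin k), (runDFA e δ q₀).evalFrom none v = none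
  | [] => rfl
  | _ :: v => runDFA_none e δ q₀ v

lemma runDFA_eval1 {n k : ℕ} {Q : Type} [DecidableEq Q] (e : Fin k ≃ Q × Fin n)
    (δ : Q → Fin n → Q) (q₀ : Q) :
    ∀ (v : List (Fin k)) (q q' : Q),
      (runDFA e δ q₀).evalFrom (some q) v = some q' →
      v.map e = runW δ q (v.map (fun b => (e b).2))
        ∧ transW δ q (v.map (fun b => (e b).2)) = q'
  | [], q, q', h => by
    have hqq : q = q' := by
      have : (some q : Option Q) = some q' := h
      injection this
    exact ⟨rfl, hqq⟩
  | b :: v, q, q', h => by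
    have hstep : (runDFA e δ q₀).evalFrom (some q) (b :: v)
        = (runDFA e δ q₀).evalFrom ((runDFA e δ q₀).step (some q) b) v := rfl
    by_cases hc : (e b).1 = q
    · have hstep2 : (runDFA e δ q₀).step (some q) b = some (δ q (e b).2) := by
        simp [runDFA, hc]
      rw [hstep, hstep2] at h
      obtain ⟨ih1, ih2⟩ := runDFA_eval1 e δ q₀ v (δ q (e b).2) q' h
      refine ⟨?_, ?_⟩
      · rw [List.map_cons, List.map_cons, runW_cons, ← ih1]
        congr 1
        exact Prod.ext hc rfl
      · rw [List.map_cons, transW_cons]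
        exact ih2
    · have hstep2 : (runDFA e δ q₀).step (some q) b = none := by
        simp [runDFA, hc]
      rw [hstep, hstep2, runDFA_none] at h
      exact absurd h (by simp)

lemma runDFA_eval2 {n k : ℕ} {Q : Type} [DecidableEq Q] (e : Fin k ≃ Q × Fin n)
    (δ : Q → Fin n → Q) (q₀ : Q) :
    ∀ (u : List (Fin n)) (q : Q),
      (runDFA e δ q₀).evalFrom (some q) ((runW δ q u).map e.symm) = some (transW δ q u)
  | [], _ => rfl
  | a :: u, q => by
    rw [runW_cons, List.map_cons, transW_cons]
    have hstep : (runDFA e δ q₀).evalFrom (some q) (e.symm (q, a) :: (runW δ (δ q a) u).map e.symm)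
        = (runDFA e δ q₀).evalFrom ((runDFA e δ q₀).step (some q) (e.symm (q, a)))
            ((runW δ (δ q a) u).map e.symm) := rfl
    have hstep2 : (runDFA e δ q₀).step (some q) (e.symm (q, a)) = some (δ q a) := by
      simp [runDFA]
    rw [hstep, hstep2]
    exact runDFA_eval2 e δ q₀ u (δ q a)


/-! ### The core transfer lemma: finite-index subgroups -/

lemma core_transfer (hC : IsCone C) {n : ℕ} {M : Type} [Group M] {π : List (Fin n) → M}
    (hπ : FreeHomOnto M π) (H' : Subgroup M) [Finite (M ⧸ H')] :
    ∃ (k : ℕ) (ρ : List (Fin k) → ↥H'), FreeHomOnto (↥H') ρ ∧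
      ∀ X : Set M, X ⊆ (H' : Set M) →
        ((CForall C π X ↔ CForall C ρ (Subtype.val ⁻¹' X)) ∧
         (CExists C π X ↔ CExists C ρ (Subtype.val ⁻¹' X))) := by
  classical
  haveI := Fintype.ofFinite (M ⧸ H')
  set Q := M ⧸ H' with hQdef
  set δ : Q → Fin n → Q := fun q a => (π [a])⁻¹ • q with hδ
  have hδeq : ∀ (q : Q) (a : Fin n), δ q a = (π [a])⁻¹ • q := fun _ _ => rfl
  set q₀ : Q := QuotientGroup.mk 1 with hq₀
  set s : Q → M := fun q => if q = q₀ then 1 else Quotient.out q with hs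
  have hs_one : s q₀ = 1 := by rw [hs]; simp
  have hs_mk : ∀ q : Q, QuotientGroup.mk (s q) = q := by
    intro q
    by_cases h : q = q₀
    · rw [h, hs_one]
    · rw [hs]; simp only [if_neg h]; exact Quotient.out_eq q
  have hmem : ∀ (q : Q) (a : Fin n), (s q)⁻¹ * π [a] * s (δ q a) ∈ H' := by
    intro q a
    have h2 : δ q a = QuotientGroup.mk ((π [a])⁻¹ * s q) := by
      rw [hδeq]
      conv_lhs => rw [← hs_mk q]
      rfl
    have h1 : (QuotientGroup.mk (s (δ q a)) : Q) = QuotientGroup.mk ((π [a])⁻¹ * s q) := by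
      rw [hs_mk]; exact h2
    have h3 := QuotientGroup.eq.mp h1
    have h4 := H'.inv_mem h3
    simpa [mul_inv_rev, mul_assoc] using h4
  have hfix : ∀ g : M, ((g⁻¹ • q₀ : Q) = q₀) ↔ g ∈ H' := by
    intro g
    rw [hq₀]
    have h1 : g⁻¹ • (QuotientGroup.mk 1 : Q) = QuotientGroup.mk (g⁻¹ * 1) := rfl
    rw [h1, mul_one, QuotientGroup.eq]
    simp
  set k := Fintype.card (Q × Fin n) with hk
  set e : Fin k ≃ Q × Fin n := (Fintype.equivFin (Q × Fin n)).symm with he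
  set gen : Fin k → ↥H' :=
    fun b => ⟨(s (e b).1)⁻¹ * π [(e b).2] * s (δ (e b).1 (e b).2), hmem _ _⟩ with hgen
  set ρ : List (Fin k) → ↥H' := fun w => (w.map gen).prod with hρ
  have hρnil : ρ [] = 1 := rfl
  have hρapp : ∀ u v, ρ (u ++ v) = ρ u * ρ v := by
    intro u v; rw [hρ]; simp
  have hcoe : ∀ v : List (Fin k), ((ρ v : ↥H') : M)
      = ((v.map e).map (fun b : Q × Fin n => (s b.1)⁻¹ * π [b.2] * s (δ b.1 b.2))).prod := by
    intro v
    induction v with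
    | nil => simp [hρ]
    | cons b v ih =>
      rw [hρ] at ih ⊢
      simp only [List.map_cons, List.prod_cons, Subgroup.coe_mul, ih]
      rfl
  have hrun : ∀ w : List (Fin n),
      ((ρ ((runW δ q₀ w).map e.symm) : ↥H') : M) = π w * s ((π w)⁻¹ • q₀) := by
    intro w
    rw [hcoe]
    have h1 : ((runW δ q₀ w).map e.symm).map e = runW δ q₀ w := by
      simp [List.map_map]
    rw [h1, runW_prod hπ δ hδeq s w q₀, hs_one, inv_one, one_mul]
  have hρsurj : Function.Surjective ρ := by
    intro x
    obtain ⟨w, hw⟩ := hπ.surjective (x : M)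
    have hq : (π w)⁻¹ • q₀ = q₀ := by rw [hw]; exact (hfix _).mpr x.2
    refine ⟨(runW δ q₀ w).map e.symm, Subtype.ext ?_⟩
    rw [hrun w, hq, hs_one, mul_one, hw]
  have hFH : FreeHomOnto (↥H') ρ := ⟨hρnil, hρapp, hρsurj⟩
  choose uemb huemb using fun b : Fin k => hπ.surjective ((gen b : ↥H') : M)
  have hflat : ∀ w : List (Fin k), π (w.flatMap uemb) = ((ρ w : ↥H') : M) := by
    refine flatMap_eq hπ.map_nil hπ.map_append ?_ ?_ uemb ?_
    · rw [hρnil]; rfl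
    · intro u v; rw [hρapp]; rfl
    · intro a; rw [huemb]; congr 1; simp [hρ]
  set eproj : Fin k → List (Fin n) := fun b => [(e b).2] with heproj
  have hproj : ∀ v : List (Fin k), v.flatMap eproj = v.map (fun b => (e b).2) := by
    intro v
    induction v with
    | nil => rfl
    | cons b v ih => simp only [List.flatMap_cons, List.map_cons, ih]; rfl
  set R : Set (List (Fin k)) :=
    {v | (runDFA e δ q₀).evalFrom (some q₀) v = some q₀} with hR
  have hRreg : IsRegularLang R :=
    ⟨Option Q, inferInstance, runDFA e δ q₀, fun w => by rw [DFA.mem_accepts]; exact Iff.rfl⟩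
  have hR1 : ∀ v : List (Fin k), v ∈ R → v = (runW δ q₀ (v.flatMap eproj)).map e.symm
      ∧ (π (v.flatMap eproj))⁻¹ • q₀ = q₀ := by
    intro v hv
    obtain ⟨h1, h2⟩ := runDFA_eval1 e δ q₀ v q₀ q₀ hv
    rw [hproj]
    constructor
    · rw [← h1, List.map_map]
      simp
    · rw [← transW_smul hπ δ hδeq _ q₀, h2]
  have hR2 : ∀ w : List (Fin n), (π w)⁻¹ • q₀ = q₀ → ((runW δ q₀ w).map e.symm) ∈ R := by
    intro w hw
    show (runDFA e δ q₀).evalFrom (some q₀) _ = some q₀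
    rw [runDFA_eval2 e δ q₀ w q₀, transW_smul hπ δ hδeq w q₀, hw]
  have hrunproj : ∀ w : List (Fin n), ((runW δ q₀ w).map e.symm).flatMap eproj = w := by
    intro w
    rw [hproj, List.map_map]
    have h1 : ((fun b => (e b).2) ∘ e.symm) = (Prod.snd : Q × Fin n → Fin n) := by
      funext b; simp
    rw [h1, runW_snd]
  have hkey : ∀ v ∈ R, ((ρ v : ↥H') : M) = π (v.flatMap eproj) := by
    intro v hv
    obtain ⟨h1, h2⟩ := hR1 v hv
    conv_lhs => rw [h1]
    rw [hrun, h2, hs_one, mul_one]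
  refine ⟨k, ρ, hFH, fun X hX => ?_⟩
  have hXfix : ∀ w : List (Fin n), π w ∈ X → (π w)⁻¹ • q₀ = q₀ :=
    fun w hw => (hfix (π w)).mpr (hX hw)
  constructor
  · constructor
    · intro h
      have hset : {v : List (Fin k) | ρ v ∈ Subtype.val ⁻¹' X}
          = {v | v.flatMap uemb ∈ {w : List (Fin n) | π w ∈ X}} := by
        ext v
        simp only [Set.mem_setOf_eq, Set.mem_preimage, hflat v]
      show _ ∈ C k
      rw [hset]
      exact hC.2.1 k n uemb _ h
    · intro h
      have h2 := hC.2.2 k _ h R hRreg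
      have h3 := hC.1 k n eproj _ h2
      have hset : (fun v : List (Fin k) => v.flatMap eproj)
          '' ({v | ρ v ∈ Subtype.val ⁻¹' X} ∩ R) = {w : List (Fin n) | π w ∈ X} := by
        ext w
        constructor
        · rintro ⟨v, ⟨hv1, hv2⟩, rfl⟩
          show π (v.flatMap eproj) ∈ X
          rw [← hkey v hv2]
          exact hv1
        · intro hw
          refine ⟨(runW δ q₀ w).map e.symm, ⟨?_, hR2 w (hXfix w hw)⟩, hrunproj w⟩
          show ((ρ _ : ↥H') : M) ∈ X
          rw [hrun w, hXfix w hw, hs_one, mul_one]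
          exact hw
      show _ ∈ C n
      rw [← hset]
      exact h3
  · constructor
    · rintro ⟨L, hL, hLX⟩
      refine ⟨{v : List (Fin k) | v.flatMap eproj ∈ L} ∩ R,
        hC.2.2 k _ (hC.2.1 k n eproj L hL) R hRreg, ?_⟩
      ext x
      constructor
      · rintro ⟨v, ⟨hv1, hv2⟩, rfl⟩
        show ((ρ v : ↥H') : M) ∈ X
        rw [hkey v hv2, ← hLX]
        exact ⟨_, hv1, rfl⟩
      · intro hx
        have hx2 : (x : M) ∈ π '' L := by rw [hLX]; exact hx
        obtain ⟨w, hw, hwx⟩ := hx2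
        have hfixw : (π w)⁻¹ • q₀ = q₀ := by rw [hwx]; exact (hfix _).mpr x.2
        refine ⟨(runW δ q₀ w).map e.symm, ⟨?_, hR2 w hfixw⟩, ?_⟩
        · show _ ∈ L
          rw [hrunproj w]
          exact hw
        · apply Subtype.ext
          rw [hrun w, hfixw, hs_one, mul_one, hwx]
    · rintro ⟨L', hL', hLX⟩
      refine ⟨(fun v : List (Fin k) => v.flatMap uemb) '' L', hC.1 k n uemb L' hL', ?_⟩
      have h1 : π '' ((fun v : List (Fin k) => v.flatMap uemb) '' L')
          = Subtype.val '' (ρ '' L') := by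
        rw [Set.image_image, Set.image_image]
        exact Set.image_congr' (fun v => hflat v)
      rw [h1, hLX, Set.image_preimage_eq_of_subset]
      rwa [Subtype.range_coe_subtype]


/-! ### Coset decomposition -/

lemma decomp_forall (hC : IsFullSemiAFL C) {n : ℕ} {M : Type} [Group M] {π : List (Fin n) → M}
    (hπ : FreeHomOnto M π) (H' : Subgroup M) [Finite (M ⧸ H')]
    {Q : Type} [Finite Q] [Nonempty Q] (r : Q → M) (X : Set M)
    (cover : ∀ x ∈ X, ∃ q, x * (r q)⁻¹ ∈ H') :
    CForall C π X ↔ ∀ q, CForall C π {x | x ∈ X ∧ x * (r q)⁻¹ ∈ H'} := by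
  constructor
  · intro h q
    have h2 := hC.1.2.2 n _ h _ (coset_lang_regular hπ H' (r q))
    have hset : {w : List (Fin n) | π w ∈ X} ∩ {w | π w * (r q)⁻¹ ∈ H'}
        = {w | π w ∈ {x | x ∈ X ∧ x * (r q)⁻¹ ∈ H'}} := by
      ext w; exact Iff.rfl
    show _ ∈ C n
    rw [← hset]
    exact h2
  · intro h
    have hset : {w : List (Fin n) | π w ∈ X}
        = ⋃ q, {w | π w ∈ {x | x ∈ X ∧ x * (r q)⁻¹ ∈ H'}} := by
      ext w
      simp only [Set.mem_iUnion, Set.mem_setOf_eq]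
      constructor
      · intro hw; obtain ⟨q, hq⟩ := cover _ hw; exact ⟨q, hw, hq⟩
      · rintro ⟨q, hq, _⟩; exact hq
    show _ ∈ C n
    rw [hset]
    exact biUnion_mem hC.2 _ (fun q => h q)

lemma decomp_exists (hC : IsFullSemiAFL C) {n : ℕ} {M : Type} [Group M] {π : List (Fin n) → M}
    (hπ : FreeHomOnto M π) (H' : Subgroup M) [Finite (M ⧸ H')]
    {Q : Type} [Finite Q] [Nonempty Q] (r : Q → M) (X : Set M)
    (cover : ∀ x ∈ X, ∃ q, x * (r q)⁻¹ ∈ H') :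
    CExists C π X ↔ ∀ q, CExists C π {x | x ∈ X ∧ x * (r q)⁻¹ ∈ H'} := by
  constructor
  · rintro ⟨L, hL, hLX⟩ q
    refine ⟨L ∩ {w | π w * (r q)⁻¹ ∈ H'},
      hC.1.2.2 n L hL _ (coset_lang_regular hπ H' (r q)), ?_⟩
    ext x
    constructor
    · rintro ⟨w, ⟨hw1, hw2⟩, rfl⟩
      exact ⟨by rw [← hLX]; exact ⟨w, hw1, rfl⟩, hw2⟩
    · rintro ⟨hx1, hx2⟩
      have hx3 : x ∈ π '' L := by rw [hLX]; exact hx1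
      obtain ⟨w, hw, rfl⟩ := hx3
      exact ⟨w, ⟨hw, hx2⟩, rfl⟩
  · intro h
    choose L hL hLX using h
    refine ⟨⋃ q, L q, biUnion_mem hC.2 _ hL, ?_⟩
    rw [Set.image_iUnion]
    ext x
    simp only [Set.mem_iUnion]
    constructor
    · rintro ⟨q, hq⟩
      rw [hLX q] at hq
      exact hq.1
    · intro hx
      obtain ⟨q, hq⟩ := cover _ hx
      refine ⟨q, ?_⟩
      rw [hLX q]
      exact ⟨hx, hq⟩

/-! ### Swapping `subgroupOf` -/

def swapSubgroupOf {G : Type} [Group G] (H K : Subgroup G) :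
    ↥(H.subgroupOf K) ≃* ↥(K.subgroupOf H) where
  toFun x := ⟨⟨((x : ↥K) : G), Subgroup.mem_subgroupOf.mp x.2⟩,
    Subgroup.mem_subgroupOf.mpr (x : ↥K).2⟩
  invFun x := ⟨⟨((x : ↥H) : G), Subgroup.mem_subgroupOf.mp x.2⟩,
    Subgroup.mem_subgroupOf.mpr (x : ↥H).2⟩
  left_inv x := by apply Subtype.ext; apply Subtype.ext; rfl
  right_inv x := by apply Subtype.ext; apply Subtype.ext; rfl
  map_mul' x y := by apply Subtype.ext; apply Subtype.ext; rfl

/-! ### Direction 1: flatness of `G` implies flatness of `H` -/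

lemma dir1 (hC : IsFullSemiAFL C) {G : Type} [Group G]
    (hGfg : ∃ (N : ℕ) (π : List (Fin N) → G), FreeHomOnto G π)
    (H : Subgroup G) (hfi : H.FiniteIndex) :
    (GroupCForallFlat C G → GroupCForallFlat C ↥H) ∧
    (GroupCExistsFlat C G → GroupCExistsFlat C ↥H) := by
  haveI := hfi
  obtain ⟨N, πG, hπG⟩ := hGfg
  obtain ⟨k₀, ρH, hρH, hcore⟩ := core_transfer hC.1 hπG H
  have common : ∀ (K : Subgroup ↥H) (k : ℕ) (ρK : List (Fin k) → ↥K), FreeHomOnto (↥K) ρK →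
      ∀ X : Set ↥H, X ⊆ (K : Set ↥H) →
      (Subtype.val '' X ⊆ (H : Set G)) ∧ (Subtype.val '' X ⊆ (K.map H.subtype : Set G)) ∧
      (Subtype.val ⁻¹' (Subtype.val '' X) = X) ∧
      FreeHomOnto (↥(K.map H.subtype))
        (fun w => (K.equivMapOfInjective H.subtype H.subtype_injective) (ρK w)) ∧
      (∀ x : ↥K, x ∈ (Subtype.val ⁻¹' X : Set ↥K) ↔
        (K.equivMapOfInjective H.subtype H.subtype_injective) x
          ∈ (Subtype.val ⁻¹' (Subtype.val '' X) : Set ↥(K.map H.subtype))) := by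
    intro K k ρK hρK X hXK
    refine ⟨?_, ?_, Set.preimage_image_eq X Subtype.val_injective,
      iso_fho hρK _, fun x => ?_⟩
    · rintro _ ⟨x, hx, rfl⟩; exact x.2
    · rintro _ ⟨x, hx, rfl⟩; exact ⟨x, hXK hx, rfl⟩
    · show ((x : ↥H) ∈ X) ↔
        ((K.equivMapOfInjective H.subtype H.subtype_injective x : ↥(K.map H.subtype)) : G)
          ∈ Subtype.val '' X
      rw [Subgroup.coe_equivMapOfInjective_apply]
      exact (Function.Injective.mem_set_image Subtype.val_injective).symm
  constructor
  · intro hG K n k πH ρK hπH hρK X hXK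
    obtain ⟨hXGH, hXGK, hpre, hρ', hS⟩ := common K k ρK hρK X hXK
    have h1 : CForall C πG (Subtype.val '' X) ↔
        CForall C ρH (Subtype.val ⁻¹' (Subtype.val '' X)) := (hcore _ hXGH).1
    rw [hpre] at h1
    have h2 : CForall C ρH X ↔ CForall C πH X := indep_forall hC.1 hρH hπH X
    have h3 := hG (K.map H.subtype) N k πG _ hπG hρ' (Subtype.val '' X) hXGK
    have h4 := iso_forall (C := C) (ρ := ρK)
      (K.equivMapOfInjective H.subtype H.subtype_injective) hS
    exact h2.symm.trans (h1.symm.trans (h3.trans h4.symm))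
  · intro hG K n k πH ρK hπH hρK X hXK
    obtain ⟨hXGH, hXGK, hpre, hρ', hS⟩ := common K k ρK hρK X hXK
    have h1 : CExists C πG (Subtype.val '' X) ↔
        CExists C ρH (Subtype.val ⁻¹' (Subtype.val '' X)) := (hcore _ hXGH).2
    rw [hpre] at h1
    have h2 : CExists C ρH X ↔ CExists C πH X := indep_exists hC.1 hρH hπH X
    have h3 := hG (K.map H.subtype) N k πG _ hπG hρ' (Subtype.val '' X) hXGK
    have h4 := iso_exists (C := C) (ρ := ρK)
      (K.equivMapOfInjective H.subtype H.subtype_injective) hS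
    exact h2.symm.trans (h1.symm.trans (h3.trans h4.symm))


/-! ### Direction 2: flatness of `H` implies flatness of `G` -/

lemma dir2 (hC : IsFullSemiAFL C) {G : Type} [Group G]
    (H : Subgroup G) (hfi : H.FiniteIndex) :
    (GroupCForallFlat C ↥H → GroupCForallFlat C G) ∧
    (GroupCExistsFlat C ↥H → GroupCExistsFlat C G) := by
  haveI := hfi
  have main : ∀ (mode : Bool),
      (if mode then GroupCForallFlat C ↥H else GroupCExistsFlat C ↥H) →
      ∀ (K : Subgroup G) (n k : ℕ) (π : List (Fin n) → G) (ρK : List (Fin k) → ↥K),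
      FreeHomOnto G π → FreeHomOnto (↥K) ρK →
      ∀ X : Set G, X ⊆ (K : Set G) →
      (if mode then (CForall C π X ↔ CForall C ρK (Subtype.val ⁻¹' X))
        else (CExists C π X ↔ CExists C ρK (Subtype.val ⁻¹' X))) := by
    intro mode hH K n k π ρK hπ hρK X hXK
    obtain ⟨kH, ρH, hρH, hcoreG⟩ := core_transfer hC.1 hπ H
    obtain ⟨k₀, ρ₀, hρ₀, hcoreK⟩ := core_transfer hC.1 hρK (H.subgroupOf K)
    have hρJ : FreeHomOnto (↥(K.subgroupOf H)) (fun w => swapSubgroupOf H K (ρ₀ w)) :=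
      iso_fho hρ₀ (swapSubgroupOf H K)
    haveI : Nonempty (↥K ⧸ H.subgroupOf K) := ⟨QuotientGroup.mk 1⟩
    set r : (↥K ⧸ H.subgroupOf K) → ↥K := fun q => (Quotient.out q)⁻¹ with hr
    have hcov : ∀ x : ↥K, x * (r (QuotientGroup.mk x⁻¹))⁻¹ ∈ H.subgroupOf K := by
      intro x
      rw [hr]
      simp only [inv_inv]
      have h1 : (QuotientGroup.mk (x⁻¹ : ↥K) : ↥K ⧸ H.subgroupOf K)
          = QuotientGroup.mk (Quotient.out (QuotientGroup.mk x⁻¹ : ↥K ⧸ H.subgroupOf K)) :=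
        (Quotient.out_eq _).symm
      have h2 := QuotientGroup.eq.mp h1
      simpa using h2
    have coverG : ∀ x ∈ X, ∃ q : ↥K ⧸ H.subgroupOf K, x * (((r q : ↥K) : G))⁻¹ ∈ H := by
      intro x hx
      refine ⟨QuotientGroup.mk ((⟨x, hXK hx⟩ : ↥K))⁻¹, ?_⟩
      have h2 := Subgroup.mem_subgroupOf.mp (hcov ⟨x, hXK hx⟩)
      simpa using h2
    have coverK : ∀ x ∈ (Subtype.val ⁻¹' X : Set ↥K),
        ∃ q : ↥K ⧸ H.subgroupOf K, x * (r q)⁻¹ ∈ H.subgroupOf K :=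
      fun x _ => ⟨QuotientGroup.mk x⁻¹, hcov x⟩
    have perq : ∀ q : ↥K ⧸ H.subgroupOf K,
        (if mode then
          (CForall C π {x | x ∈ X ∧ x * (((r q : ↥K) : G))⁻¹ ∈ H} ↔
           CForall C ρK {x | x ∈ (Subtype.val ⁻¹' X : Set ↥K) ∧ x * (r q)⁻¹ ∈ H.subgroupOf K})
        else
          (CExists C π {x | x ∈ X ∧ x * (((r q : ↥K) : G))⁻¹ ∈ H} ↔
           CExists C ρK {x | x ∈ (Subtype.val ⁻¹' X : Set ↥K) ∧ x * (r q)⁻¹ ∈ H.subgroupOf K})) := by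
      intro q
      set rq : ↥K := r q with hrq
      set Xq : Set G := {x | x ∈ X ∧ x * ((rq : G))⁻¹ ∈ H} with hXq
      set Yq : Set G := {x | x * (rq : G) ∈ Xq} with hYq
      have hYH : Yq ⊆ (H : Set G) := by
        intro x hx
        have h1 := hx.2
        have h2 : x * (rq : G) * ((rq : G))⁻¹ = x := by group
        rwa [h2] at h1
      have hYK : Yq ⊆ (K : Set G) := by
        intro x hx
        have h2 := hXK hx.1
        have h3 : x = (x * (rq : G)) * ((rq : G))⁻¹ := by group
        rw [h3]
        exact K.mul_mem h2 (K.inv_mem rq.2)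
      have hsubJ : (Subtype.val ⁻¹' Yq : Set ↥H) ⊆ (K.subgroupOf H : Set ↥H) :=
        fun x hx => Subgroup.mem_subgroupOf.mpr (hYK hx)
      have hsubK : (Subtype.val ⁻¹' Yq : Set ↥K) ⊆ ((H.subgroupOf K : Subgroup ↥K) : Set ↥K) :=
        fun x hx => Subgroup.mem_subgroupOf.mpr (hYH hx)
      have hSswap : ∀ x : ↥(H.subgroupOf K),
          x ∈ (Subtype.val ⁻¹' (Subtype.val ⁻¹' Yq : Set ↥K)) ↔
          swapSubgroupOf H K x ∈ (Subtype.val ⁻¹' (Subtype.val ⁻¹' Yq : Set ↥H)) :=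
        fun _ => Iff.rfl
      have stepF : (Subtype.val ⁻¹' Yq : Set ↥K)
          = {x : ↥K | x * rq ∈ (Subtype.val ⁻¹' Xq : Set ↥K)} := by
        ext x
        exact Iff.rfl
      have stepH : (Subtype.val ⁻¹' Xq : Set ↥K)
          = {x : ↥K | x ∈ (Subtype.val ⁻¹' X : Set ↥K) ∧ x * rq⁻¹ ∈ H.subgroupOf K} := by
        ext x
        constructor
        · rintro ⟨hx1, hx2⟩
          refine ⟨hx1, Subgroup.mem_subgroupOf.mpr ?_⟩
          simpa using hx2
        · rintro ⟨hx1, hx2⟩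
          refine ⟨hx1, ?_⟩
          have h5 := Subgroup.mem_subgroupOf.mp hx2
          simpa using h5
      cases mode
      · -- CExists case
        have hHe : GroupCExistsFlat C ↥H := hH
        show CExists C π Xq ↔
          CExists C ρK {x | x ∈ (Subtype.val ⁻¹' X : Set ↥K) ∧ x * rq⁻¹ ∈ H.subgroupOf K}
        have stepA : CExists C π Xq ↔ CExists C π Yq :=
          translate_iff_exists hC.1 hπ (rq : G) Xq
        have stepB : CExists C π Yq ↔ CExists C ρH (Subtype.val ⁻¹' Yq) := (hcoreG Yq hYH).2
        have stepC := hHe (K.subgroupOf H) kH k₀ ρH _ hρH hρJ (Subtype.val ⁻¹' Yq) hsubJ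
        have stepD := iso_exists (C := C) (ρ := ρ₀) (swapSubgroupOf H K) hSswap
        have stepE := (hcoreK (Subtype.val ⁻¹' Yq) hsubK).2
        have stepG := translate_iff_exists hC.1 hρK rq (Subtype.val ⁻¹' Xq)
        refine stepA.trans (stepB.trans (stepC.trans (stepD.symm.trans (stepE.symm.trans ?_))))
        rw [stepF]
        exact stepG.symm.trans (by rw [stepH])
      · -- CForall case
        have hHf : GroupCForallFlat C ↥H := hH
        show CForall C π Xq ↔
          CForall C ρK {x | x ∈ (Subtype.val ⁻¹' X : Set ↥K) ∧ x * rq⁻¹ ∈ H.subgroupOf K}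
        have stepA : CForall C π Xq ↔ CForall C π Yq :=
          translate_iff_forall hC.1 hπ (rq : G) Xq
        have stepB : CForall C π Yq ↔ CForall C ρH (Subtype.val ⁻¹' Yq) := (hcoreG Yq hYH).1
        have stepC := hHf (K.subgroupOf H) kH k₀ ρH _ hρH hρJ (Subtype.val ⁻¹' Yq) hsubJ
        have stepD := iso_forall (C := C) (ρ := ρ₀) (swapSubgroupOf H K) hSswap
        have stepE := (hcoreK (Subtype.val ⁻¹' Yq) hsubK).1
        have stepG := translate_iff_forall hC.1 hρK rq (Subtype.val ⁻¹' Xq)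
        refine stepA.trans (stepB.trans (stepC.trans (stepD.symm.trans (stepE.symm.trans ?_))))
        rw [stepF]
        exact stepG.symm.trans (by rw [stepH])
    cases mode
    · show CExists C π X ↔ CExists C ρK (Subtype.val ⁻¹' X)
      have dG := decomp_exists hC hπ H
        (fun q : ↥K ⧸ H.subgroupOf K => ((r q : ↥K) : G)) X coverG
      have dK := decomp_exists hC hρK (H.subgroupOf K) r (Subtype.val ⁻¹' X) coverK
      rw [dG, dK]
      exact forall_congr' (fun q => perq q)
    · show CForall C π X ↔ CForall C ρK (Subtype.val ⁻¹' X)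
      have dG := decomp_forall hC hπ H
        (fun q : ↥K ⧸ H.subgroupOf K => ((r q : ↥K) : G)) X coverG
      have dK := decomp_forall hC hρK (H.subgroupOf K) r (Subtype.val ⁻¹' X) coverK
      rw [dG, dK]
      exact forall_congr' (fun q => perq q)
  exact ⟨fun hH K n k π ρK hπ hρK X hXK => main true hH K n k π ρK hπ hρK X hXK,
         fun hH K n k π ρK hπ hρK X hXK => main false hH K n k π ρK hπ hρK X hXK⟩

end S15A

/-- Let `C` be a full semi-AFL, `G` a finitely generated group and
`H ≤ G` a subgroup of finite index.  Then, for each `• ∈ {∀, ∃}`, `G` is `C^•`-flat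
(as a group) iff `H` is `C^•`-flat (as a group). -/
theorem stmt15 (C : LangClass) (hC : IsFullSemiAFL C)
    {G : Type} [Group G]
    (hGfg : ∃ (n : ℕ) (π : List (Fin n) → G), FreeHomOnto G π)
    (H : Subgroup G) (hfi : H.FiniteIndex) :
    (GroupCForallFlat C G ↔ GroupCForallFlat C ↥H) ∧
    (GroupCExistsFlat C G ↔ GroupCExistsFlat C ↥H) := by
  obtain ⟨d1f, d1e⟩ := S15A.dir1 hC hGfg H hfi
  obtain ⟨d2f, d2e⟩ := S15A.dir2 hC H hfi
  exact ⟨⟨d1f, d2f⟩, ⟨d1e, d2e⟩⟩
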